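/- For every nonempty set I, every abelian group G whose exponent divides m (m ≥ 1), and all n, k ≥ 0 with n + k > 0, the Brandt semigroup B_{G,I} satisfies the semigroup identity u_{n,k,m} ≈ (u_{n,k,m})². -/

import Mathlib

universe u v

/-- Carrier of the Brandt semigroup `B_{G,I}`: `none` is the zero element. -/
def Brandt (I G : Type*) : Type _ := Option (I × G × I)

open Classical in
/-- Multiplication of the Brandt semigroup `B_{G,I}`. -/
noncomputable def bmul {I G : Type*} [Mul G] : Brandt I G → Brandt I G → Brandt I G
  | some (l1, g1, r1), some (l2, g2, r2) => if r1 = l2 then some (l1, g1 * g2, r2) else none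
  | _, _ => none

/-- Evaluation of a (nonempty) word, given as a list of variables, in a magma with an
explicit binary operation; the empty word evaluates to `none`. -/
def wEval {ι S : Type*} (mul : S → S → S) (ρ : ι → S) : List ι → Option S
  | [] => none
  | a :: l => some (l.foldl (fun s i => mul s (ρ i)) (ρ a))

/-- The word `u_{n,k,m} = x₁⋯x_{n+k}(xₙ⋯x₁·x_{n+1}⋯x_{n+k})^{2m-1}` (variables 0-indexed). -/
def uWord (n k m : ℕ) : List ℕ :=
  List.range (n + k) ++
    (List.replicate (2 * m - 1) ((List.range n).reverse ++ List.range' n k)).flatten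

section BrandtAux

variable {I : Type u} {G : Type v}

theorem bmul_some_some [Mul G] (l : I) (g1 : G) (t : I) (g2 : G) (r : I) :
    bmul (some (l, g1, t) : Brandt I G) (some (t, g2, r)) = some (l, g1 * g2, r) := by
  unfold bmul; simp; rfl

theorem bmul_eq_some [Mul G] {x y : Brandt I G} {l : I} {g : G} {r : I}
    (h : bmul x y = some (l, g, r)) :
    ∃ g1 t g2, x = some (l, g1, t) ∧ y = some (t, g2, r) ∧ g = g1 * g2 := by
  match x, y with
  | none, _ => unfold bmul at h; simp at h
  | some _, none => unfold bmul at h; simp at h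
  | some (l1, g1, r1), some (l2, g2, r2) =>
    by_cases hc : r1 = l2
    · unfold bmul at h; simp only [hc, if_pos] at h
      have h := Option.some.inj h
      simp only [Prod.mk.injEq] at h
      obtain ⟨h1, h2, h3⟩ := h
      subst h1 h2 h3
      exact ⟨g1, l2, g2, by rw [hc], rfl, rfl⟩
    · unfold bmul at h; simp [hc] at h

theorem bmul_none_left [Mul G] (y : Brandt I G) : bmul (none : Brandt I G) y = none := by
  cases y <;> rfl

theorem bmul_assoc [Semigroup G] (x y z : Brandt I G) :
    bmul (bmul x y) z = bmul x (bmul y z) := by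
  match x, y, z with
  | none, _, _ => cases y <;> cases z <;> rfl
  | some _, none, _ => cases z <;> rfl
  | some a, some b, none =>
    show bmul (bmul (some a) (some b)) none = none
    obtain ⟨l1,g1,r1⟩ := a; obtain ⟨l2,g2,r2⟩ := b
    by_cases h1 : r1 = l2 <;> unfold bmul <;> simp [h1] <;> rfl
  | some (l1, g1, r1), some (l2, g2, r2), some (l3, g3, r3) =>
    by_cases h1 : r1 = l2 <;> by_cases h2 : r2 = l3 <;>
      unfold bmul <;> simp [h1, h2, mul_assoc] <;> rfl

/-- Evaluation of a nonempty word as an element of the Brandt semigroup. -/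
noncomputable def Ev [Mul G] (ρ : ℕ → Brandt I G) : List ℕ → Brandt I G
  | [] => none
  | a :: l => l.foldl (fun s i => bmul s (ρ i)) (ρ a)

theorem wEval_eq_Ev [Mul G] (ρ : ℕ → Brandt I G) {w : List ℕ} (h : w ≠ []) :
    wEval bmul ρ w = some (Ev ρ w) := by
  cases w with
  | nil => exact absurd rfl h
  | cons a l => rfl

theorem foldl_bmul [Semigroup G] (ρ : ℕ → Brandt I G) (l : List ℕ) :
    ∀ (a : ℕ) (x : Brandt I G),
      List.foldl (fun s i => bmul s (ρ i)) x (a :: l)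
        = bmul x (List.foldl (fun s i => bmul s (ρ i)) (ρ a) l) := by
  induction l with
  | nil => intro a x; rfl
  | cons b l ih =>
    intro a x
    show List.foldl _ (bmul x (ρ a)) (b :: l) = _
    rw [ih b (bmul x (ρ a)), bmul_assoc, ← ih b (ρ a)]

theorem Ev_append [Semigroup G] (ρ : ℕ → Brandt I G) {w1 w2 : List ℕ}
    (h1 : w1 ≠ []) (h2 : w2 ≠ []) :
    Ev ρ (w1 ++ w2) = bmul (Ev ρ w1) (Ev ρ w2) := by
  match w1, w2 with
  | a :: l1, b :: l2 =>
    show List.foldl _ (ρ a) (l1 ++ b :: l2) = _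
    rw [List.foldl_append, foldl_bmul]
    rfl

theorem Ev_reverse [CommGroup G] (ρ : ℕ → Brandt I G) (w : List ℕ) :
    ∀ {p q p' q' : I} {g g' : G},
      Ev ρ w = some (p, g, q) → Ev ρ w.reverse = some (p', g', q') →
      g' = g ∧ ((p = p' ∧ q = q') ∨ (p = q ∧ p' = q')) := by
  induction w using List.reverseRecOn with
  | nil => intro p q p' q' g g' h1 _; exact absurd h1 (by simp [Ev])
  | append_singleton w' x ih =>
    intro p q p' q' g g' h1 h2
    rcases eq_or_ne w' [] with rfl | hne
    · simp only [List.nil_append, List.reverse_singleton] at h1 h2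
      have hx : Ev ρ [x] = ρ x := rfl
      rw [hx] at h1 h2
      rw [h1] at h2
      have h2 := Option.some.inj h2
      rw [Prod.mk.injEq, Prod.mk.injEq] at h2
      exact ⟨h2.2.1.symm, Or.inl ⟨h2.1, h2.2.2⟩⟩
    · have hrev : (w' ++ [x]).reverse = [x] ++ w'.reverse := by simp
      rw [Ev_append ρ hne (by simp)] at h1
      rw [hrev, Ev_append ρ (by simp) (by simp [hne])] at h2
      obtain ⟨gw, t, gx, hw', hx, hg⟩ := bmul_eq_some h1
      obtain ⟨gx', s, grw, hx', hrw', hg'⟩ := bmul_eq_some h2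
      have hx0 : Ev ρ [x] = ρ x := rfl
      rw [hx0] at hx
      rw [hx0, hx] at hx'
      have hx' := Option.some.inj hx'
      rw [Prod.mk.injEq, Prod.mk.injEq] at hx'
      obtain ⟨htp', hgx, hqs⟩ := hx'
      obtain ⟨hgrw, hor⟩ := ih hw' hrw'
      constructor
      · rw [hg, hg', hgrw, ← hgx, mul_comm]
      · rcases hor with ⟨h3, h4⟩ | ⟨h3, h4⟩
        · exact Or.inr ⟨h3.trans hqs.symm, htp'.symm.trans h4⟩
        · exact Or.inl ⟨h3.trans htp', hqs.trans h4⟩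

theorem Ev_flatten_replicate [CommGroup G] (ρ : ℕ → Brandt I G) (B : List ℕ) (hB : B ≠ []) :
    ∀ j, 1 ≤ j → ∀ {l r : I} {g : G},
      Ev ρ (List.replicate j B).flatten = some (l, g, r) →
      ∃ gB : G, Ev ρ B = some (l, gB, r) ∧ g = gB ^ j ∧ (2 ≤ j → r = l) := by
  intro j
  induction j with
  | zero => omega
  | succ j ih =>
    intro _ l r g h
    rcases Nat.eq_zero_or_pos j with rfl | hj
    · have hone : (List.replicate 1 B).flatten = B := by simp
      rw [hone] at h
      exact ⟨g, h, (pow_one g).symm, by omega⟩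
    · have hflat : (List.replicate (j+1) B).flatten = B ++ (List.replicate j B).flatten := by
        rw [List.replicate_succ, List.flatten_cons]
      have hfne : (List.replicate j B).flatten ≠ [] := by
        obtain ⟨j', rfl⟩ := Nat.exists_eq_add_of_le hj
        rw [Nat.add_comm, List.replicate_succ, List.flatten_cons]
        simp [hB]
      rw [hflat, Ev_append ρ hB hfne] at h
      obtain ⟨g1, t, g2, hBv, hFv, hg⟩ := bmul_eq_some h
      obtain ⟨gB, hBv', hgB, _⟩ := ih hj hFv
      rw [hBv] at hBv'
      have hBv' := Option.some.inj hBv'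
      rw [Prod.mk.injEq, Prod.mk.injEq] at hBv'
      obtain ⟨hlt, hg1, htr⟩ := hBv'
      refine ⟨g1, by rw [hBv, htr], ?_, fun _ => by rw [← htr, ← hlt]⟩
      rw [hg, hgB, ← hg1, pow_succ']

end BrandtAux

/-- For every nonempty `I`, every abelian group `G` of exponent dividing `m`
(`m ≥ 1`) and all `n, k ≥ 0` with `n + k > 0`, the Brandt semigroup `B_{G,I}` satisfies the
identity `u_{n,k,m} ≈ (u_{n,k,m})²`. -/


theorem brandt_satisfies_u_identity {I : Type u} [Nonempty I] {G : Type v} [CommGroup G]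
    (m : ℕ) (hm : 1 ≤ m) (hexp : ∀ g : G, g ^ m = 1) (n k : ℕ) (hnk : 0 < n + k) :
    ∀ ρ : ℕ → Brandt I G,
      wEval bmul ρ (uWord n k m) = wEval bmul ρ (uWord n k m ++ uWord n k m) := by
  intro ρ
  set A : List ℕ := List.range n with hA
  set C : List ℕ := List.range' n k with hC
  set B : List ℕ := A.reverse ++ C with hBdef
  set P : List ℕ := List.range (n + k) with hP
  set F : List ℕ := (List.replicate (2 * m - 1) B).flatten with hF
  have hPAC : P = A ++ C := by rw [hP, hA, hC, List.range_add, List.range'_eq_map_range]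
  have hP_ne : P ≠ [] := by
    rw [hP]; simp only [ne_eq, List.range_eq_nil]; omega
  have hB_ne : B ≠ [] := by
    intro h
    have := congrArg List.length h
    simp [hBdef, hA, hC] at this
    omega
  have hF_ne : F ≠ [] := by
    rw [hF]
    have h1 : 2 * m - 1 = (2 * m - 2) + 1 := by omega
    rw [h1, List.replicate_succ, List.flatten_cons]
    simp [hB_ne]
  have huPF : uWord n k m = P ++ F := rfl
  have hu_ne : uWord n k m ≠ [] := by
    rw [huPF]; simp [hP_ne]
  rw [wEval_eq_Ev ρ hu_ne, wEval_eq_Ev ρ (by simp [hu_ne] : uWord n k m ++ uWord n k m ≠ []),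
    Ev_append ρ hu_ne hu_ne]
  rcases hz : Ev ρ (uWord n k m) with _ | ⟨l, g, r⟩
  · exact congrArg some (bmul_none_left _).symm
  · -- nonzero case
    rw [huPF, Ev_append ρ hP_ne hF_ne] at hz
    obtain ⟨gP, t, gF, hEvP, hEvF, hg⟩ := bmul_eq_some hz
    obtain ⟨gB, hEvB, hgF, -⟩ :=
      Ev_flatten_replicate ρ B hB_ne (2 * m - 1) (by omega) hEvF
    -- key claim: r = l and gB = gP
    have key : r = l ∧ gB = gP := by
      rcases Nat.eq_zero_or_pos n with rfl | hn
      · -- n = 0 : B = C = P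
        have hPB : P = B := by
          rw [hP, hBdef, hA, hC]
          simp [List.range_eq_range']
        rw [← hPB, hEvP] at hEvB
        have hEvB := Option.some.inj hEvB
        rw [Prod.mk.injEq, Prod.mk.injEq] at hEvB
        exact ⟨hEvB.2.2.symm.trans hEvB.1.symm, hEvB.2.1.symm⟩
      rcases Nat.eq_zero_or_pos k with rfl | hk
      · -- k = 0 : C = [], B = A.reverse, P = A
        have hPA : P = A := by rw [hP, hA, Nat.add_zero]
        have hBA : B = A.reverse := by rw [hBdef, hC]; simp
        rw [hPA] at hEvP
        rw [hBA] at hEvB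
        obtain ⟨hgBP, hor⟩ := Ev_reverse ρ A hEvP hEvB
        refine ⟨?_, hgBP⟩
        rcases hor with ⟨h1, h2⟩ | ⟨h1, h2⟩
        · exact h2.symm.trans h1.symm
        · exact h2.symm.trans h1.symm
      · -- n, k > 0
        have hA_ne : A ≠ [] := by rw [hA]; simp; omega
        have hC_ne : C ≠ [] := by
          rw [hC]; intro h
          have := congrArg List.length h
          simp at this; omega
        rw [hPAC, Ev_append ρ hA_ne hC_ne] at hEvP
        obtain ⟨gA, s, gC, hEvA, hEvC, hgP⟩ := bmul_eq_some hEvP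
        rw [hBdef, Ev_append ρ (by simp [hA_ne]) hC_ne] at hEvB
        obtain ⟨gA', s', gC', hEvAr, hEvC', hgB⟩ := bmul_eq_some hEvB
        rw [hEvC] at hEvC'
        have hEvC' := Option.some.inj hEvC'
        rw [Prod.mk.injEq, Prod.mk.injEq] at hEvC'
        obtain ⟨hss', hgC, htr⟩ := hEvC'
        obtain ⟨hgA', hor⟩ := Ev_reverse ρ A hEvA (by rw [← hss'] at hEvAr; exact hEvAr)
        constructor
        · rcases hor with ⟨h1, h2⟩ | ⟨h1, h2⟩
          · exact htr.symm.trans h1.symm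
          · exact (htr.symm.trans h2).trans h1.symm
        · rw [hgB, hgA', hgP, hgC]
    obtain ⟨hrl, hgBP⟩ := key
    have hg1 : g = 1 := by
      rw [hg, hgF, hgBP, ← pow_succ']
      have h2m : 2 * m - 1 + 1 = 2 * m := by omega
      rw [h2m, pow_mul]
      exact hexp _
    rw [hg1, hrl, bmul_some_some, one_mul]
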